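/- arXiv:2503.09207 — 3 statements merged into one kernel-verified Lean document; each statement's English description precedes it below -/
import Mathlib

section
/- Let p be a prime, G and H abelian groups, and J a subgroup of G × H. Let π_G and π_H denote the projections from G × H to G and H respectively, and let J₀ := ker(J → G/G^p) be the subgroup of elements of J whose G-component is a p-th power in G. Then the sequence of elementary abelian p-groups 0 → π_H(J₀)·H^p/H^p → H/H^p → (G × H)/(J·(G × H)^p) is exact, where the first map is the inclusion-induced map and the second is induced by h ↦ (1,h). -/
/-- The subgroup of `p`-th powers of a commutative group. -/
def pPowSubgroup (p : ℕ) (G : Type*) [CommGroup G] : Subgroup G :=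
  (powMonoidHom p : G →* G).range

/-- `J₀ = ker(J → G/G^p)`: elements of `J` whose `G`-component is a `p`-th power. -/
def Jzero (p : ℕ) {G H : Type*} [CommGroup G] [CommGroup H] (J : Subgroup (G × H)) :
    Subgroup (G × H) :=
  J ⊓ (pPowSubgroup p G).prod ⊤

/-- `A = π_H(J₀) · H^p`. -/
def Asub (p : ℕ) {G H : Type*} [CommGroup G] [CommGroup H] (J : Subgroup (G × H)) :
    Subgroup H :=
  (Jzero p J).map (MonoidHom.snd G H) ⊔ pPowSubgroup p H

/-- The first map `π_H(J₀)·H^p/H^p → H/H^p`, induced by the inclusion. -/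
noncomputable def firstMap (p : ℕ) {G H : Type*} [CommGroup G] [CommGroup H]
    (J : Subgroup (G × H)) :
    (Asub p J) ⧸ ((pPowSubgroup p H).subgroupOf (Asub p J)) →* H ⧸ pPowSubgroup p H :=
  QuotientGroup.map _ _ (Asub p J).subtype le_rfl

/-- The second map `H/H^p → (G × H)/(J·(G × H)^p)`, induced by `h ↦ (1, h)`. -/
noncomputable def secondMap (p : ℕ) {G H : Type*} [CommGroup G] [CommGroup H]
    (J : Subgroup (G × H)) :
    H ⧸ pPowSubgroup p H →* (G × H) ⧸ (J ⊔ pPowSubgroup p (G × H)) :=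
  QuotientGroup.map _ _ (MonoidHom.inr G H)
    (by
      rintro _ ⟨y, rfl⟩
      exact Subgroup.mem_sup_right ⟨(1, y), by simp [powMonoidHom, Prod.ext_iff]⟩)

/-- The sequence `0 → π_H(J₀)·H^p/H^p → H/H^p → (G × H)/(J·(G × H)^p)` is exact. -/
theorem exact_pPow_quotient_sequence (p : ℕ) (hp : p.Prime) (G H : Type*)
    [CommGroup G] [CommGroup H] (J : Subgroup (G × H)) :
    Function.Injective (firstMap p J) ∧
      (firstMap p J).range = (secondMap p J).ker := by
  constructor
  · rw [← MonoidHom.ker_eq_bot_iff, eq_bot_iff]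
    intro x hx
    obtain ⟨a, rfl⟩ := QuotientGroup.mk'_surjective _ x
    have h1 : (firstMap p J) (QuotientGroup.mk a) = 1 := hx
    change (QuotientGroup.mk ((Asub p J).subtype a) : H ⧸ pPowSubgroup p H) = 1 at h1
    rw [QuotientGroup.eq_one_iff] at h1
    simpa [Subgroup.mem_bot, QuotientGroup.eq_one_iff, Subgroup.mem_subgroupOf] using h1
  · ext x
    simp only [MonoidHom.mem_range, MonoidHom.mem_ker]
    constructor
    · rintro ⟨y, rfl⟩
      obtain ⟨a, rfl⟩ := QuotientGroup.mk'_surjective _ y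
      have ha : (a : H) ∈ (Jzero p J).map (MonoidHom.snd G H) ⊔ pPowSubgroup p H := a.2
      rw [Subgroup.mem_sup] at ha
      obtain ⟨b, hb, c, hc, habc⟩ := ha
      obtain ⟨⟨g, b'⟩, hj, rfl⟩ := hb
      obtain ⟨k, rfl⟩ := hc
      obtain ⟨g₀, hg₀⟩ := hj.2.1
      show QuotientGroup.mk _ = 1
      rw [QuotientGroup.eq_one_iff]
      simp only [powMonoidHom_apply] at hg₀ habc
      have : (MonoidHom.inr G H) ((Asub p J).subtype a) = (g, b') * (g₀⁻¹, k) ^ p := by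
        simp only [MonoidHom.inr_apply, Subgroup.coe_subtype, ← habc]
        ext
        · simp [inv_pow, hg₀]
        · simp
      rw [this]
      exact Subgroup.mul_mem_sup hj.1 ⟨(g₀⁻¹, k), rfl⟩
    · intro hx
      obtain ⟨h, rfl⟩ := QuotientGroup.mk'_surjective _ x
      have h1 : ((1 : G), h) ∈ J ⊔ pPowSubgroup p (G × H) := by
        rwa [show ((1 : G), h) = (MonoidHom.inr G H) h from rfl, ← QuotientGroup.eq_one_iff]
      rw [Subgroup.mem_sup] at h1
      obtain ⟨j, hj, z, hz, hjz⟩ := h1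
      obtain ⟨⟨g₀, h₀⟩, rfl⟩ := hz
      have hj1 : j.1 = (g₀⁻¹) ^ p := by
        have := congrArg Prod.fst hjz
        simp [powMonoidHom] at this
        rw [inv_pow]
        exact mul_eq_one_iff_eq_inv.mp this
      have hj0 : j ∈ Jzero p J := ⟨hj, ⟨g₀⁻¹, by simp [powMonoidHom, hj1]⟩, trivial⟩
      have hh2 : h = j.2 * h₀ ^ p := by
        have := congrArg Prod.snd hjz
        simp [powMonoidHom] at this
        exact this.symm
      have hmem : h ∈ Asub p J := by
        show h ∈ (Jzero p J).map (MonoidHom.snd G H) ⊔ pPowSubgroup p H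
        rw [hh2]
        exact Subgroup.mul_mem_sup ⟨j, hj0, rfl⟩ ⟨h₀, rfl⟩
      exact ⟨QuotientGroup.mk ⟨h, hmem⟩, rfl⟩
end

section
/- Let p be a prime, G and H abelian groups, and J a subgroup of G × H. Let J₀ := ker(J → G/G^p). Then the image of the natural restriction map Hom((G × H)/J, Z/pZ) → Hom(H, Z/pZ) (given by precomposing with h ↦ class of (1,h)) is exactly the set of homomorphisms H → Z/pZ that vanish on π_H(J₀), i.e. equals Hom(H/π_H(J₀), Z/pZ). -/
private lemma pow_p_eq_one (p : ℕ) (x : Multiplicative (ZMod p)) : x ^ p = 1 :=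
  Multiplicative.toAdd.injective (by
    rw [toAdd_pow, nsmul_eq_mul, ZMod.natCast_self, zero_mul]; rfl)

/-- A character into `ℤ/pℤ` extends along `f : A →* B` iff it vanishes on the preimage of
`p`-th powers. -/
private lemma extension_lemma (p : ℕ) (hp : p.Prime) {A B : Type*} [CommGroup A] [CommGroup B]
    (f : A →* B) (ψ : A →* Multiplicative (ZMod p))
    (h : ∀ a : A, f a ∈ (powMonoidHom p : B →* B).range → ψ a = 1) :
    ∃ φ : B →* Multiplicative (ZMod p), φ.comp f = ψ := by
  haveI : Fact p.Prime := ⟨hp⟩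
  haveI : NeZero p := ⟨hp.ne_zero⟩
  have instMod : Module (ZMod p) (Additive (B ⧸ (powMonoidHom p : B →* B).range)) :=
    AddCommGroup.zmodModule (by
      intro x
      obtain ⟨b, hb⟩ := QuotientGroup.mk_surjective (s := (powMonoidHom p : B →* B).range) x.toMul
      refine Additive.toMul.injective ?_
      rw [toMul_nsmul, ← hb, ← QuotientGroup.mk_pow]
      exact (QuotientGroup.eq_one_iff _).mpr ⟨b, rfl⟩)
  letI := instMod
  set ℓ : A →* (B ⧸ (powMonoidHom p : B →* B).range) :=
    (QuotientGroup.mk' (powMonoidHom p : B →* B).range).comp f with hℓ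
  set Fψ : A → ZMod p := fun a => (ψ a).toAdd with hFψ
  have key : ∀ x y : A, ℓ x = ℓ y → Fψ x = Fψ y := by
    intro x y hxy
    have h1 : ℓ (x / y) = 1 := by rw [map_div, hxy, div_self']
    have h2 : f (x / y) ∈ (powMonoidHom p : B →* B).range := by
      rw [← QuotientGroup.eq_one_iff]; exact h1
    have := h _ h2
    rw [map_div, div_eq_one] at this
    simpa [hFψ] using congrArg Multiplicative.toAdd this
  set S : Submodule (ZMod p) (Additive (B ⧸ (powMonoidHom p : B →* B).range)) :=
    AddSubgroup.toZModSubmodule p (Subgroup.toAddSubgroup ℓ.range) with hS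
  have memS : ∀ a : A, Additive.ofMul (ℓ a) ∈ S := fun a => ⟨a, rfl⟩
  have specS : ∀ x : S, ∃ a : A, ℓ a = Additive.toMul x.1 := fun x => x.2
  set f₀ : S → ZMod p := fun x => Fψ (Classical.choose (specS x)) with hf₀
  have hf₀spec : ∀ x : S, ℓ (Classical.choose (specS x)) = Additive.toMul x.1 :=
    fun x => Classical.choose_spec (specS x)
  have hf₀val : ∀ (a : A) (hx : Additive.ofMul (ℓ a) ∈ S), f₀ ⟨_, hx⟩ = Fψ a := by
    intro a hx
    exact key _ _ (hf₀spec ⟨_, hx⟩)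
  have hadd : ∀ x y : S, f₀ (x + y) = f₀ x + f₀ y := by
    intro x y
    obtain ⟨a, ha⟩ := specS x
    obtain ⟨b, hb⟩ := specS y
    have hxy : ℓ (a * b) = Additive.toMul (x + y).1 := by
      rw [map_mul, ha, hb]; rfl
    have h1 : f₀ (x + y) = Fψ (a * b) := key _ _ ((hf₀spec (x + y)).trans hxy.symm)
    have h2 : f₀ x = Fψ a := key _ _ ((hf₀spec x).trans ha.symm)
    have h3 : f₀ y = Fψ b := key _ _ ((hf₀spec y).trans hb.symm)
    rw [h1, h2, h3]
    simp [hFψ]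
  set lam0 : S →ₗ[ZMod p] ZMod p := (AddMonoidHom.mk' f₀ hadd).toZModLinearMap p with hlam0
  obtain ⟨Λ, hΛ⟩ := LinearMap.exists_extend lam0
  refine ⟨MonoidHom.mk' (fun b => Multiplicative.ofAdd (Λ (Additive.ofMul
    (QuotientGroup.mk b : B ⧸ (powMonoidHom p : B →* B).range)))) ?_, ?_⟩
  · intro a b
    simp only [QuotientGroup.mk_mul, ofMul_mul, map_add, ofAdd_add]
  · ext a
    have h1 : (QuotientGroup.mk (f a) : B ⧸ (powMonoidHom p : B →* B).range) = ℓ a := rfl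
    have h2 : Λ (Additive.ofMul (ℓ a)) = lam0 ⟨Additive.ofMul (ℓ a), memS a⟩ := by
      have := congrArg (fun g => g ⟨Additive.ofMul (ℓ a), memS a⟩) hΛ
      simpa using this
    simp only [MonoidHom.comp_apply, MonoidHom.mk'_apply, h1, h2]
    have h3 : (lam0 ⟨Additive.ofMul (ℓ a), memS a⟩ : ZMod p) = Fψ a := hf₀val a (memS a)
    rw [h3]
    simp [hFψ]

/-- The image of the restriction map `Hom((G × H)/J, ℤ/pℤ) → Hom(H, ℤ/pℤ)`,
given by precomposing with `h ↦ class of (1, h)`, is exactly the set of homomorphisms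
`H → ℤ/pℤ` vanishing on `π_H(J₀)`, where `J₀ = ker(J → G/G^p)`. -/
theorem image_restriction_eq_vanishing_on_piH_Jzero
    (p : ℕ) (hp : p.Prime) (G H : Type*) [CommGroup G] [CommGroup H]
    (J : Subgroup (G × H)) (ψ : H →* Multiplicative (ZMod p)) :
    (∃ φ : (G × H) ⧸ J →* Multiplicative (ZMod p),
        φ.comp ((QuotientGroup.mk' J).comp (MonoidHom.inr G H)) = ψ) ↔
      ∀ x ∈ (J ⊓ ((powMonoidHom p : G →* G).range.prod ⊤)).map (MonoidHom.snd G H),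
        ψ x = 1 := by
  constructor
  · rintro ⟨φ, hφ⟩ x hx
    obtain ⟨⟨g, h⟩, ⟨hJ, hprod⟩, rfl⟩ := hx
    obtain ⟨a, ha⟩ := hprod.1
    have hg : a ^ p = g := by simpa using ha
    have h1 : ((QuotientGroup.mk ((1 : G), h) : (G × H) ⧸ J)) =
        (QuotientGroup.mk ((a⁻¹, 1) : G × H)) ^ p := by
      rw [← QuotientGroup.mk_pow, QuotientGroup.eq]
      have : ((1:G), h)⁻¹ * ((a⁻¹, (1:H)) ^ p) = ((g, h) : G × H)⁻¹ := by
        simp [Prod.ext_iff, inv_pow, hg]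
      rw [this]
      exact inv_mem hJ
    show ψ h = 1
    rw [← hφ]
    show φ (QuotientGroup.mk ((1 : G), h)) = 1
    rw [h1, map_pow, pow_p_eq_one]
  · intro hv
    apply extension_lemma p hp
    intro a ha
    obtain ⟨q, hq⟩ := ha
    obtain ⟨⟨g, b⟩, rfl⟩ := QuotientGroup.mk_surjective q
    have hq' : ((g, b) ^ p : G × H)⁻¹ * ((1 : G), a) ∈ J := by
      rw [← QuotientGroup.eq]
      simpa [← QuotientGroup.mk_pow] using hq
    have hmem : (((g ^ p)⁻¹ : G), b⁻¹ ^ p * a) ∈ J ⊓ ((powMonoidHom p : G →* G).range.prod ⊤) := by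
      constructor
      · have : (((g, b) ^ p : G × H)⁻¹ * ((1 : G), a)) = ((g ^ p)⁻¹, b⁻¹ ^ p * a) := by
          simp [Prod.ext_iff, inv_pow]
        rwa [this] at hq'
      · exact ⟨⟨g⁻¹, by simp [powMonoidHom_apply, inv_pow]⟩, trivial⟩
    have h1 : ψ (b⁻¹ ^ p * a) = 1 := hv _ ⟨_, hmem, rfl⟩
    have h2 : ψ (b ^ p) = 1 := by rw [map_pow, pow_p_eq_one]
    have hdecomp : a = b ^ p * (b⁻¹ ^ p * a) := by simp [inv_pow, mul_assoc]
    rw [hdecomp, map_mul, h1, h2, mul_one]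
end

section
/- Let p be a prime, G and H abelian groups, and J a subgroup of G × H. If the natural map J/J^p → G/G^p (induced by the projection π_G) is injective, then the restriction map Hom((G × H)/J, Z/pZ) → Hom(H, Z/pZ) is surjective. -/
/-- If the natural map `J/J^p → G/G^p` induced by the projection `π_G` is injective,
then the restriction map `Hom((G × H)/J, ℤ/pℤ) → Hom(H, ℤ/pℤ)` is surjective. -/
theorem restriction_surjective_of_injective
    (p : ℕ) (hp : p.Prime) (G H : Type*) [CommGroup G] [CommGroup H]
    (J : Subgroup (G × H))
    (hinj : Function.Injective
      (QuotientGroup.map ((powMonoidHom p : J →* J).range)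
        ((powMonoidHom p : G →* G).range)
        ((MonoidHom.fst G H).comp J.subtype)
        (by rintro _ ⟨y, rfl⟩; exact ⟨(y : G × H).1, by simp [powMonoidHom]⟩))) :
    Function.Surjective
      (fun φ : (G × H) ⧸ J →* Multiplicative (ZMod p) =>
        φ.comp ((QuotientGroup.mk' J).comp (MonoidHom.inr G H))) := by
  haveI : Fact p.Prime := ⟨hp⟩
  intro ψ
  -- the subgroup N = J ⊔ (G×H)^p and the quotient W
  set P : Subgroup (G × H) := (powMonoidHom p : (G × H) →* (G × H)).range with hP
  set N : Subgroup (G × H) := J ⊔ P with hN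
  set W := (G × H) ⧸ N with hW
  letI : CommGroup W := inferInstanceAs (CommGroup ((G × H) ⧸ N))
  letI : AddCommGroup (Additive W) := inferInstanceAs (AddCommGroup (Additive ((G × H) ⧸ N)))
  set ι₀ : H →* W := (QuotientGroup.mk' N).comp (MonoidHom.inr G H) with hι₀
  -- every element of Multiplicative (ZMod p) has p-th power 1
  have hzp : ∀ a : Multiplicative (ZMod p), a ^ p = 1 := by
    intro a
    have : (p : ZMod p) * a.toAdd = 0 := by simp [ZMod.natCast_self]
    apply Multiplicative.toAdd.injective
    simpa [toAdd_pow, nsmul_eq_mul] using this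
  set Φ := QuotientGroup.map ((powMonoidHom p : J →* J).range)
        ((powMonoidHom p : G →* G).range)
        ((MonoidHom.fst G H).comp J.subtype)
        (by rintro _ ⟨y, rfl⟩; exact ⟨(y : G × H).1, by simp [powMonoidHom]⟩) with hΦ
  -- key: ψ kills the kernel of ι₀
  have key : ∀ h : H, ι₀ h = 1 → ψ h = 1 := by
    intro h hh
    have hmem : ((1 : G), h) ∈ N := by
      rw [← QuotientGroup.eq_one_iff]
      exact hh
    rw [hN, Subgroup.mem_sup] at hmem
    obtain ⟨j, hjJ, q, hqP, hjq⟩ := hmem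
    obtain ⟨x, rfl⟩ := hqP
    -- j.1 = (x.1)⁻¹ ^ p
    have hj1 : j.1 = (x.1)⁻¹ ^ p := by
      have := congrArg Prod.fst hjq
      simp only [Prod.fst_mul, powMonoidHom_apply, Prod.pow_fst] at this
      rw [inv_pow]
      exact eq_inv_of_mul_eq_one_left this
    -- the element of J
    set jJ : J := ⟨j, hjJ⟩ with hjJ'
    have himg : Φ (QuotientGroup.mk jJ) = Φ (QuotientGroup.mk (1 : J)) := by
      rw [hΦ, QuotientGroup.map_mk, QuotientGroup.map_mk]
      show QuotientGroup.mk ((jJ : G × H).1) = QuotientGroup.mk (((1 : J) : G × H).1)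
      exact (QuotientGroup.eq_one_iff _).mpr ⟨(x.1)⁻¹, by simp [powMonoidHom, hjJ', hj1]⟩
    have h1 := hinj himg
    rw [QuotientGroup.eq] at h1
    obtain ⟨k, hk⟩ := h1
    -- jJ = (k⁻¹) ^ p
    have hk' : jJ = k⁻¹ ^ p := by
      have h2 : jJ⁻¹ = k ^ p := by
        rw [mul_one] at hk
        rw [← hk]; rfl
      rw [inv_pow, ← h2, inv_inv]
    have hjk : j = ((k⁻¹ : J) : G × H) ^ p := by
      have := congrArg (fun z : J => (z : G × H)) hk'
      simpa using this
    -- h = (k⁻¹.2 * x.2) ^ p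
    have hh2 : h = (((k⁻¹ : J) : G × H).2 * x.2) ^ p := by
      have := congrArg Prod.snd hjq
      simp only [Prod.snd_mul, powMonoidHom_apply, Prod.pow_snd] at this
      rw [← this, hjk, mul_pow, Prod.pow_snd]
    rw [hh2, map_pow, hzp]
  -- ψ is constant on fibers of ι₀
  have wd : ∀ h₁ h₂ : H, ι₀ h₁ = ι₀ h₂ → ψ h₁ = ψ h₂ := by
    intro h₁ h₂ he
    have : ι₀ (h₁ * h₂⁻¹) = 1 := by rw [map_mul, map_inv, he, mul_inv_cancel]
    have := key _ this
    rw [map_mul, map_inv] at this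
    exact mul_inv_eq_one.mp this
  -- W is a ZMod p vector space
  have hWone : ∀ w : W, w ^ p = 1 := by
    intro w
    induction' w using QuotientGroup.induction_on with y
    show QuotientGroup.mk (y ^ p) = (1 : W)
    rw [QuotientGroup.eq_one_iff]
    exact Subgroup.mem_sup_right ⟨y, rfl⟩
  have hWp : ∀ x : Additive W, p • x = 0 := by
    intro x
    rw [show x = Additive.ofMul (Additive.toMul x) from rfl, ← ofMul_pow, hWone]
    rfl
  letI instMod : Module (ZMod p) (Additive W) := AddCommGroup.zmodModule hWp
  haveI : Module (ZMod p) (Additive W) := instMod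
  -- the image of ι₀ as a submodule
  set S : Submodule (ZMod p) (Additive W) :=
    AddSubgroup.toZModSubmodule p (Subgroup.toAddSubgroup ι₀.range) with hS
  have memS : ∀ h : H, Additive.ofMul (ι₀ h) ∈ S := fun h => ⟨h, rfl⟩
  -- choice of preimages
  have hchoose : ∀ s : ↥S, ∃ h : H, ι₀ h = Additive.toMul (s : Additive W) := by
    rintro ⟨s, hs⟩; exact hs
  classical
  set c : ↥S → H := fun s => Classical.choose (hchoose s) with hc
  have hcspec : ∀ s : ↥S, ι₀ (c s) = Additive.toMul (s : Additive W) :=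
    fun s => Classical.choose_spec (hchoose s)
  -- additive functional on S
  set fA : ↥S →+ ZMod p := AddMonoidHom.mk' (fun s => Multiplicative.toAdd (ψ (c s))) (by
    intro s t
    have : ι₀ (c (s + t)) = ι₀ (c s * c t) := by
      rw [map_mul, hcspec, hcspec, hcspec]; rfl
    have h3 := wd _ _ this
    show Multiplicative.toAdd (ψ (c (s + t)))
      = Multiplicative.toAdd (ψ (c s)) + Multiplicative.toAdd (ψ (c t))
    rw [h3, map_mul]; rfl) with hfA
  set f₁ : ↥S →ₗ[ZMod p] ZMod p := fA.toZModLinearMap p with hf₁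
  obtain ⟨C, hC⟩ := Submodule.exists_isCompl S
  set F : Additive W →ₗ[ZMod p] ZMod p := f₁.comp (Submodule.projectionOnto S C hC) with hF
  have hFS : ∀ s : ↥S, F (s : Additive W) = f₁ s := by
    intro s
    rw [hF, LinearMap.comp_apply, Submodule.projectionOnto_apply_left]
  -- the projection (G×H)/J → W
  have hJN : J ≤ Subgroup.comap (MonoidHom.id (G × H)) N := fun x hx => Subgroup.mem_sup_left hx
  set π : (G × H) ⧸ J →* W := QuotientGroup.map J N (MonoidHom.id _) hJN with hπ
  refine ⟨MonoidHom.mk' (fun x => Multiplicative.ofAdd (F (Additive.ofMul (π x)))) (by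
    intro a b
    have hab : π (a * b) = π a * π b := map_mul π a b
    show Multiplicative.ofAdd (F (Additive.ofMul (π (a * b))))
      = Multiplicative.ofAdd (F (Additive.ofMul (π a))) * Multiplicative.ofAdd (F (Additive.ofMul (π b)))
    rw [hab, ofMul_mul, map_add, ofAdd_add]), ?_⟩
  ext h
  simp only [MonoidHom.comp_apply, MonoidHom.mk'_apply, QuotientGroup.mk'_apply,
    MonoidHom.inr_apply]
  have hπh : π (QuotientGroup.mk ((1 : G), h)) = ι₀ h := by
    rw [hπ, QuotientGroup.map_mk]; rfl
  rw [hπh]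
  have h1 : F (Additive.ofMul (ι₀ h)) = f₁ ⟨Additive.ofMul (ι₀ h), memS h⟩ :=
    hFS ⟨Additive.ofMul (ι₀ h), memS h⟩
  rw [h1]
  have h2 : ψ (c ⟨Additive.ofMul (ι₀ h), memS h⟩) = ψ h := by
    apply wd
    rw [hcspec]; rfl
  show Multiplicative.ofAdd (Multiplicative.toAdd (ψ (c _))) = ψ h
  rw [h2]
  rfl
end
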